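/- For every integer n ≥ 0, the number of vectors p ∈ ℤ⁵ with |p_i| ≤ n for all i and p_1+⋯+p_5 even equals 16n⁵ + 40n⁴ + 40n³ + 20n² + 5n + (1+(−1)^n)/2; moreover, for every integer n ≥ 1, the number of vectors p ∈ ℤ⁵ with max_i |p_i| = n and even coordinate sum equals 1 + 40n² + 80n⁴ + (−1)^n. -/

import Mathlib

open Finset


/-- `D5b n` : the number of vectors `p ∈ ℤ⁵` with `|p i| ≤ n` for all `i`
and even coordinate sum (bulk count for the `D₅` lattice). -/
noncomputable def D5b (n : ℕ) : ℕ :=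
  Nat.card {p : Fin 5 → ℤ // (∀ i, |p i| ≤ (n : ℤ)) ∧ Even (∑ i, p i)}

/-- `D5s n` : the number of vectors `p ∈ ℤ⁵` with `max_i |p i| = n`
and even coordinate sum (surface count for the `D₅` lattice). -/
noncomputable def D5s (n : ℕ) : ℕ :=
  Nat.card {p : Fin 5 → ℤ //
    (∀ i, |p i| ≤ (n : ℤ)) ∧ (∃ i, |p i| = (n : ℤ)) ∧ Even (∑ i, p i)}

noncomputable def Ebox (n : ℕ) : Finset (Fin 5 → ℤ) :=
  (Fintype.piFinset fun _ : Fin 5 => Finset.Icc (-(n:ℤ)) n).filter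
    (fun p => Even (∑ i, p i))

lemma D5b_eq (n : ℕ) : D5b n = (Ebox n).card := by
  rw [D5b, Nat.card_congr (Equiv.subtypeEquivRight (q := fun p => p ∈ Ebox n) ?_),
    Nat.card_eq_fintype_card, Fintype.card_coe]
  intro p
  simp [Ebox, Fintype.mem_piFinset, abs_le, mem_Icc, and_comm]


def χ (k : ℤ) : ℤ := ((Int.negOnePow k : ℤˣ) : ℤ)

lemma χ_add (a b : ℤ) : χ (a + b) = χ a * χ b := by
  simp [χ, Int.negOnePow_add]

lemma sum_χ (n : ℕ) : ∑ x ∈ Finset.Icc (-(n:ℤ)) n, χ x = (-1) ^ n := by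
  induction n with
  | zero => simp [χ]
  | succ n ih =>
    have h : Finset.Icc (-((n+1:ℕ):ℤ)) ((n+1:ℕ):ℤ)
        = insert (-((n:ℤ)+1)) (insert ((n:ℤ)+1) (Finset.Icc (-(n:ℤ)) n)) := by
      ext x; simp [mem_Icc]; push_cast; omega
    rw [h, Finset.sum_insert, Finset.sum_insert, ih]
    · have h1 : χ ((n:ℤ)+1) = -(-1)^n := by
        simp only [χ, Int.negOnePow_succ, Units.val_neg, neg_inj]
        exact Int.coe_negOnePow_natCast n
      have h2 : χ (-((n:ℤ)+1)) = -(-1)^n := by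
        rw [show χ (-((n:ℤ)+1)) = χ ((n:ℤ)+1) by rw [χ, Int.negOnePow_neg]; rfl]; exact h1
      rw [h1, h2, pow_succ]; ring
    · simp [mem_Icc]
      try omega
    · simp [mem_Icc]
      try push_cast
      try omega

lemma χ_even {k : ℤ} (h : Even k) : χ k = 1 := by
  simp [χ, Int.negOnePow_even k h]

lemma χ_odd {k : ℤ} (h : ¬ Even k) : χ k = -1 := by
  simp [χ, Int.negOnePow_odd k (Int.not_even_iff_odd.mp h)]

lemma card_Icc_int (n : ℕ) : ((Finset.Icc (-(n:ℤ)) n).card : ℤ) = 2*(n:ℤ)+1 := by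
  rw [Int.card_Icc]; omega

lemma two_Ebox (n : ℕ) :
    2 * ((Ebox n).card : ℤ) = (2*(n:ℤ)+1)^5 + (-1)^n := by
  classical
  set B := Fintype.piFinset fun _ : Fin 5 => Finset.Icc (-(n:ℤ)) n with hB
  have hsum : ∑ p ∈ B, (1 + χ (∑ i, p i)) = 2 * ((Ebox n).card : ℤ) := by
    rw [← Finset.sum_filter_add_sum_filter_not B (fun p => Even (∑ i, p i))]
    have e1 : ∑ p ∈ B.filter (fun p => Even (∑ i, p i)), (1 + χ (∑ i, p i))
        = ∑ _p ∈ B.filter (fun p => Even (∑ i, p i)), (2:ℤ) :=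
      Finset.sum_congr rfl (fun p hp => by
        rw [χ_even (Finset.mem_filter.mp hp).2]; norm_num)
    have e2 : ∑ p ∈ B.filter (fun p => ¬ Even (∑ i, p i)), (1 + χ (∑ i, p i))
        = ∑ _p ∈ B.filter (fun p => ¬ Even (∑ i, p i)), (0:ℤ) :=
      Finset.sum_congr rfl (fun p hp => by
        rw [χ_odd (Finset.mem_filter.mp hp).2]; norm_num)
    rw [e1, e2, Finset.sum_const, Finset.sum_const, Ebox]
    push_cast
    ring
  have hcard : ((B.card : ℤ)) = (2*(n:ℤ)+1)^5 := by
    rw [hB, Fintype.card_piFinset]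
    rw [Finset.prod_const, Finset.card_univ, Fintype.card_fin]
    push_cast
    rw [card_Icc_int]
  have hchi : ∑ p ∈ B, χ (∑ i, p i) = (-1)^n := by
    have hmul : ∀ p : Fin 5 → ℤ, χ (∑ i, p i) = ∏ i, χ (p i) := by
      intro p
      rw [Fin.sum_univ_five, Fin.prod_univ_five, χ_add, χ_add, χ_add, χ_add]
    rw [Finset.sum_congr rfl (fun p _ => hmul p), ← Finset.prod_univ_sum]
    rw [Finset.prod_const (b := ∑ x ∈ Finset.Icc (-(n:ℤ)) n, χ x)]
    rw [sum_χ, Finset.card_univ, Fintype.card_fin]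
    rcases Nat.even_or_odd n with h | h
    · simp [h.neg_one_pow]
    · simp [h.neg_one_pow]
  have hd : ∑ p ∈ B, (1 + χ (∑ i, p i)) = B.card + ∑ p ∈ B, χ (∑ i, p i) := by
    rw [Finset.sum_add_distrib]; simp
  rw [hd, hcard, hchi] at hsum
  linarith [hsum]

lemma Ebox_mono (n : ℕ) : Ebox n ⊆ Ebox (n+1) := by
  intro p hp
  simp only [Ebox, Finset.mem_filter, Fintype.mem_piFinset, Finset.mem_Icc] at hp ⊢
  refine ⟨fun i => ?_, hp.2⟩
  have := hp.1 i
  push_cast at this ⊢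
  omega

lemma D5s_eq (k : ℕ) : D5s (k+1) = ((Ebox (k+1)) \ (Ebox k)).card := by
  rw [D5s, Nat.card_congr (Equiv.subtypeEquivRight
      (q := fun p => p ∈ Ebox (k+1) \ Ebox k) ?_),
    Nat.card_eq_fintype_card, Fintype.card_coe]
  intro p
  simp only [Ebox, Finset.mem_sdiff, Finset.mem_filter, Fintype.mem_piFinset,
    Finset.mem_Icc]
  constructor
  · rintro ⟨h1, ⟨i, hi⟩, h3⟩
    refine ⟨⟨fun j => abs_le.mp (h1 j), h3⟩, ?_⟩
    rintro ⟨h4, -⟩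
    have h5 := h4 i
    rcases abs_cases (p i) with ⟨he, _⟩ | ⟨he, _⟩ <;>
      (rw [he] at hi; push_cast at hi h5; omega)
  · rintro ⟨⟨h1, h3⟩, h2⟩
    refine ⟨fun j => abs_le.mpr (h1 j), ?_, h3⟩
    by_contra hno
    push_neg at hno
    apply h2
    refine ⟨fun i => ?_, h3⟩
    have hb := h1 i
    have hni := hno i
    rcases abs_cases (p i) with ⟨he, _⟩ | ⟨he, _⟩ <;>
      (rw [he] at hni; push_cast at hb hni ⊢; omega)

theorem D5_bulk_surface :
    (∀ n : ℕ, (D5b n : ℤ) = 16 * (n : ℤ) ^ 5 + 40 * (n : ℤ) ^ 4 + 40 * (n : ℤ) ^ 3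
      + 20 * (n : ℤ) ^ 2 + 5 * (n : ℤ) + (1 + (-1) ^ n) / 2) ∧
    (∀ n : ℕ, 1 ≤ n → (D5s n : ℤ) =
      1 + 40 * (n : ℤ) ^ 2 + 80 * (n : ℤ) ^ 4 + (-1) ^ n) := by
  constructor
  · intro n
    have h := two_Ebox n
    rw [← D5b_eq] at h
    have e : (2*(n:ℤ)+1)^5 = 32*(n:ℤ)^5 + 80*(n:ℤ)^4 + 80*(n:ℤ)^3
        + 40*(n:ℤ)^2 + 10*(n:ℤ) + 1 := by ring
    rcases Nat.even_or_odd n with hp | hp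
    · rw [hp.neg_one_pow] at h ⊢
      norm_num
      linarith
    · rw [hp.neg_one_pow] at h ⊢
      norm_num
      linarith
  · intro n hn
    obtain ⟨k, rfl⟩ : ∃ k, n = k + 1 := ⟨n - 1, (Nat.succ_pred_eq_of_pos hn).symm⟩
    have hsub : Ebox k ⊆ Ebox (k+1) := Ebox_mono k
    have hcast : (D5s (k+1) : ℤ) = ((Ebox (k+1)).card : ℤ) - ((Ebox k).card : ℤ) := by
      rw [D5s_eq, Finset.card_sdiff_of_subset hsub]
      have := Finset.card_le_card hsub
      push_cast [this]
      ring
    have A := two_Ebox (k+1)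
    have B := two_Ebox k
    have e : (2*((k:ℤ)+1)+1)^5 - (2*(k:ℤ)+1)^5
        = 2*(1 + 40*((k:ℤ)+1)^2 + 80*((k:ℤ)+1)^4) := by ring
    push_cast at A hcast ⊢
    rcases Nat.even_or_odd k with hp | hp
    · rw [pow_succ ((-1:ℤ)) k, hp.neg_one_pow] at A ⊢
      rw [hp.neg_one_pow] at B
      norm_num at A ⊢
      linarith
    · rw [pow_succ ((-1:ℤ)) k, hp.neg_one_pow] at A ⊢
      rw [hp.neg_one_pow] at B
      norm_num at A ⊢
      linarith
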